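/- There exist C^∞ diffeomorphisms a, b of the open halfline (0,∞) (strictly increasing smooth bijections of (0,∞) with smooth inverses) and constants 0 < C ≤ C' such that C·t ≤ a(t) ≤ C'·t and C·t ≤ b(t) ≤ C'·t for all t > 0, and such that a and b generate a nonabelian free group of bijections of (0,∞): the group homomorphism from the free group on two generators to the group of bijections of (0,∞) sending the two generators to a and b respectively is injective. -/

import Mathlib

open Set Real Pointwise

noncomputable section

namespace Stmt3Aux

/-- The basic trigonometric polynomial. -/
def T (x : ℝ) : ℝ :=
  (-(99/256)) * Real.sin (2*π*x) + (495/4096) * Real.sin (4*π*x)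
  + (-(55/1536)) * Real.sin (6*π*x) + (33/4096) * Real.sin (8*π*x)
  + (-(3/2560)) * Real.sin (10*π*x) + (1/12288) * Real.sin (12*π*x)

/-- The displacement function. -/
def ψ (x : ℝ) : ℝ := (21/(10*π)) * T x

/-- Its derivative. -/
def dψ (x : ℝ) : ℝ := (21/5) * (((1 - Real.cos (2*π*x))/2)^6 - 231/1024)

lemma hsin (a x : ℝ) : HasDerivAt (fun x : ℝ => Real.sin (a*x)) (a * Real.cos (a*x)) x := by
  have h1 : HasDerivAt (fun x : ℝ => a * x) a x := by
    simpa using (hasDerivAt_id x).const_mul a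
  simpa [mul_comm, Function.comp_def] using (Real.hasDerivAt_sin (a*x)).comp x h1

lemma key (x : ℝ) : ((1 - Real.cos (2*π*x))/2)^6 - 231/1024 =
    (-(99/256)) * Real.cos (2*π*x) + (495/2048) * Real.cos (4*π*x)
    + (-(55/512)) * Real.cos (6*π*x) + (33/1024) * Real.cos (8*π*x)
    + (-(3/512)) * Real.cos (10*π*x) + (1/2048) * Real.cos (12*π*x) := by
  have h2 : Real.cos (4*π*x) = 2 * Real.cos (2*π*x)^2 - 1 := by
    rw [show 4*π*x = 2*(2*π*x) by ring]; exact Real.cos_two_mul _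
  have h3 : Real.cos (6*π*x) = 4 * Real.cos (2*π*x)^3 - 3 * Real.cos (2*π*x) := by
    rw [show 6*π*x = 3*(2*π*x) by ring]; exact Real.cos_three_mul _
  have h4 : Real.cos (8*π*x) = 2 * Real.cos (4*π*x)^2 - 1 := by
    rw [show 8*π*x = 2*(4*π*x) by ring]; exact Real.cos_two_mul _
  have h6 : Real.cos (12*π*x) = 2 * Real.cos (6*π*x)^2 - 1 := by
    rw [show 12*π*x = 2*(6*π*x) by ring]; exact Real.cos_two_mul _
  have h5 : Real.cos (10*π*x) = 2 * Real.cos (2*π*x) * Real.cos (8*π*x) - Real.cos (6*π*x) := by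
    have ha := Real.cos_add (8*π*x) (2*π*x)
    have hb := Real.cos_sub (8*π*x) (2*π*x)
    rw [show 10*π*x = 8*π*x + 2*π*x by ring, ha,
       show 6*π*x = 8*π*x - 2*π*x by ring, hb]
    ring
  rw [h5, h6, h4, h3, h2]; ring

lemma hψ (x : ℝ) : HasDerivAt ψ (dψ x) x := by
  have H := (((((((hsin (2*π) x).const_mul (-(99/256) : ℝ)).add
    ((hsin (4*π) x).const_mul ((495/4096) : ℝ))).add
    ((hsin (6*π) x).const_mul (-(55/1536) : ℝ))).add
    ((hsin (8*π) x).const_mul ((33/4096) : ℝ))).add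
    ((hsin (10*π) x).const_mul (-(3/2560) : ℝ))).add
    ((hsin (12*π) x).const_mul ((1/12288) : ℝ))).const_mul ((21/(10*π)) : ℝ)
  have hval : (21/(10*π)) * ((-(99/256)) * (2*π * Real.cos (2*π*x))
      + (495/4096) * (4*π * Real.cos (4*π*x)) + (-(55/1536)) * (6*π * Real.cos (6*π*x))
      + (33/4096) * (8*π * Real.cos (8*π*x)) + (-(3/2560)) * (10*π * Real.cos (10*π*x))
      + (1/12288) * (12*π * Real.cos (12*π*x))) = dψ x := by
    unfold dψ
    rw [key x]
    have hπ : (π : ℝ) ≠ 0 := Real.pi_ne_zero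
    field_simp
    ring
  rw [hval] at H
  exact H

lemma ψ_contDiff : ContDiff ℝ (⊤ : ℕ∞) ψ := by
  unfold ψ T
  have h : ∀ a : ℝ, ContDiff ℝ (⊤ : ℕ∞) (fun x : ℝ => Real.sin (a*x)) := fun a =>
    Real.contDiff_sin.comp (contDiff_const.mul contDiff_id)
  exact contDiff_const.mul ((((((contDiff_const.mul (h (2*π))).add
    (contDiff_const.mul (h (4*π)))).add (contDiff_const.mul (h (6*π)))).add
    (contDiff_const.mul (h (8*π)))).add (contDiff_const.mul (h (10*π)))).add
    (contDiff_const.mul (h (12*π))))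

lemma ψ_per (x : ℝ) (n : ℤ) : ψ (x + n) = ψ x := by
  unfold ψ T
  rw [show 2*π*(x+(n:ℝ)) = 2*π*x + (n:ℝ)*(2*π) by push_cast; ring,
      Real.sin_add_int_mul_two_pi,
      show 4*π*(x+(n:ℝ)) = 4*π*x + ((2*n : ℤ):ℝ)*(2*π) by push_cast; ring,
      Real.sin_add_int_mul_two_pi,
      show 6*π*(x+(n:ℝ)) = 6*π*x + ((3*n : ℤ):ℝ)*(2*π) by push_cast; ring,
      Real.sin_add_int_mul_two_pi,
      show 8*π*(x+(n:ℝ)) = 8*π*x + ((4*n : ℤ):ℝ)*(2*π) by push_cast; ring,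
      Real.sin_add_int_mul_two_pi,
      show 10*π*(x+(n:ℝ)) = 10*π*x + ((5*n : ℤ):ℝ)*(2*π) by push_cast; ring,
      Real.sin_add_int_mul_two_pi,
      show 12*π*(x+(n:ℝ)) = 12*π*x + ((6*n : ℤ):ℝ)*(2*π) by push_cast; ring,
      Real.sin_add_int_mul_two_pi]

lemma ψ_odd (x : ℝ) : ψ (-x) = -ψ x := by
  unfold ψ T
  rw [show 2*π*(-x) = -(2*π*x) by ring, Real.sin_neg,
      show 4*π*(-x) = -(4*π*x) by ring, Real.sin_neg,
      show 6*π*(-x) = -(6*π*x) by ring, Real.sin_neg,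
      show 8*π*(-x) = -(8*π*x) by ring, Real.sin_neg,
      show 10*π*(-x) = -(10*π*x) by ring, Real.sin_neg,
      show 12*π*(-x) = -(12*π*x) by ring, Real.sin_neg]
  ring

lemma ψ_bound (x : ℝ) : |ψ x| ≤ 1 := by
  have hπ : (3.14 : ℝ) < π := Real.pi_gt_d2
  have hpos : (0:ℝ) < 10*π := by positivity
  have s1 := Real.neg_one_le_sin (2*π*x); have s1' := Real.sin_le_one (2*π*x)
  have s2 := Real.neg_one_le_sin (4*π*x); have s2' := Real.sin_le_one (4*π*x)
  have s3 := Real.neg_one_le_sin (6*π*x); have s3' := Real.sin_le_one (6*π*x)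
  have s4 := Real.neg_one_le_sin (8*π*x); have s4' := Real.sin_le_one (8*π*x)
  have s5 := Real.neg_one_le_sin (10*π*x); have s5' := Real.sin_le_one (10*π*x)
  have s6 := Real.neg_one_le_sin (12*π*x); have s6' := Real.sin_le_one (12*π*x)
  rw [abs_le]
  unfold ψ T
  constructor
  · rw [show (21/(10*π)) * ((-(99/256)) * Real.sin (2*π*x) + (495/4096) * Real.sin (4*π*x)
      + (-(55/1536)) * Real.sin (6*π*x) + (33/4096) * Real.sin (8*π*x)
      + (-(3/2560)) * Real.sin (10*π*x) + (1/12288) * Real.sin (12*π*x))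
      = (21 * ((-(99/256)) * Real.sin (2*π*x) + (495/4096) * Real.sin (4*π*x)
      + (-(55/1536)) * Real.sin (6*π*x) + (33/4096) * Real.sin (8*π*x)
      + (-(3/2560)) * Real.sin (10*π*x) + (1/12288) * Real.sin (12*π*x))) / (10*π) by ring,
      le_div_iff₀ hpos]
    nlinarith
  · rw [show (21/(10*π)) * ((-(99/256)) * Real.sin (2*π*x) + (495/4096) * Real.sin (4*π*x)
      + (-(55/1536)) * Real.sin (6*π*x) + (33/4096) * Real.sin (8*π*x)
      + (-(3/2560)) * Real.sin (10*π*x) + (1/12288) * Real.sin (12*π*x))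
      = (21 * ((-(99/256)) * Real.sin (2*π*x) + (495/4096) * Real.sin (4*π*x)
      + (-(55/1536)) * Real.sin (6*π*x) + (33/4096) * Real.sin (8*π*x)
      + (-(3/2560)) * Real.sin (10*π*x) + (1/12288) * Real.sin (12*π*x))) / (10*π) by ring,
      div_le_one hpos]
    nlinarith

lemma ψ_at_three_eighths : ψ (3/8) < -(1/4) := by
  have e1 : Real.sin (2*π*(3/8 : ℝ)) = √2/2 := by
    rw [show 2*π*(3/8:ℝ) = π/2 + π/4 by ring, Real.sin_add, Real.sin_pi_div_two,
      Real.cos_pi_div_two, Real.sin_pi_div_four, Real.cos_pi_div_four]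
    ring
  have e2 : Real.sin (4*π*(3/8 : ℝ)) = -1 := by
    rw [show 4*π*(3/8:ℝ) = π + π/2 by ring, Real.sin_add, Real.sin_pi, Real.cos_pi,
      Real.sin_pi_div_two, Real.cos_pi_div_two]
    ring
  have e3 : Real.sin (6*π*(3/8 : ℝ)) = √2/2 := by
    rw [show 6*π*(3/8:ℝ) = π/4 + ((1 : ℤ):ℝ)*(2*π) by push_cast; ring,
      Real.sin_add_int_mul_two_pi, Real.sin_pi_div_four]
  have e4 : Real.sin (8*π*(3/8 : ℝ)) = 0 := by
    rw [show 8*π*(3/8:ℝ) = π + ((1 : ℤ):ℝ)*(2*π) by push_cast; ring,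
      Real.sin_add_int_mul_two_pi, Real.sin_pi]
  have e5 : Real.sin (10*π*(3/8 : ℝ)) = -(√2/2) := by
    rw [show 10*π*(3/8:ℝ) = -(π/4) + ((2 : ℤ):ℝ)*(2*π) by push_cast; ring,
      Real.sin_add_int_mul_two_pi, Real.sin_neg, Real.sin_pi_div_four]
  have e6 : Real.sin (12*π*(3/8 : ℝ)) = 1 := by
    rw [show 12*π*(3/8:ℝ) = π/2 + ((2 : ℤ):ℝ)*(2*π) by push_cast; ring,
      Real.sin_add_int_mul_two_pi, Real.sin_pi_div_two]
  have h2a : (1.414 : ℝ) < √2 := by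
    have h := Real.sq_sqrt (show (0:ℝ) ≤ 2 by norm_num)
    nlinarith [Real.sqrt_nonneg 2]
  have hπ : π < 3.15 := Real.pi_lt_d2
  have hpos : (0:ℝ) < 10*π := by positivity
  unfold ψ T
  rw [e1, e2, e3, e4, e5, e6]
  rw [show (21/(10*π)) * ((-(99/256)) * (√2/2) + (495/4096) * (-1)
      + (-(55/1536)) * (√2/2) + (33/4096) * 0 + (-(3/2560)) * (-(√2/2)) + (1/12288) * 1)
      = (21 * ((-(99/256)) * (√2/2) + (495/4096) * (-1)
      + (-(55/1536)) * (√2/2) + (33/4096) * 0 + (-(3/2560)) * (-(√2/2)) + (1/12288) * 1)) / (10*π)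
      by ring, div_lt_iff₀ hpos]
  nlinarith

/-- The conjugated diffeomorphism with shift `c`. -/
def f (c x : ℝ) : ℝ := x + ψ (x - c)

lemma f_hasDerivAt (c x : ℝ) : HasDerivAt (f c) (1 + dψ (x - c)) x := by
  have h1 : HasDerivAt (fun x : ℝ => ψ (x - c)) (dψ (x - c)) x := by
    simpa [Function.comp_def] using (hψ (x - c)).comp x ((hasDerivAt_id x).sub_const c)
  exact (hasDerivAt_id x).add h1

lemma dψ_pos (y : ℝ) : 0 < 1 + dψ y := by
  unfold dψ
  have h1 : Real.cos (2*π*y) ≤ 1 := Real.cos_le_one _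
  have h2 : (0:ℝ) ≤ ((1 - Real.cos (2*π*y))/2)^6 := by positivity
  nlinarith

lemma f_strictMono (c : ℝ) : StrictMono (f c) := by
  apply strictMono_of_deriv_pos
  intro x
  rw [(f_hasDerivAt c x).deriv]
  exact dψ_pos _

lemma f_continuous (c : ℝ) : Continuous (f c) :=
  continuous_iff_continuousAt.2 fun x => (f_hasDerivAt c x).continuousAt

lemma f_dist (c x : ℝ) : |f c x - x| ≤ 1 := by
  have := ψ_bound (x - c)
  simpa [f] using this

lemma f_surjective (c : ℝ) : Function.Surjective (f c) := by
  intro y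
  have h1 : f c (y - 1) ≤ y := by have := f_dist c (y-1); rw [abs_le] at this; linarith [this.2]
  have h2 : y ≤ f c (y + 1) := by have := f_dist c (y+1); rw [abs_le] at this; linarith [this.1]
  have h := intermediate_value_Icc (by linarith : y - 1 ≤ y + 1) (f_continuous c).continuousOn
  obtain ⟨x, _, hx⟩ := h ⟨h1, h2⟩
  exact ⟨x, hx⟩

lemma f_add_int (c x : ℝ) (n : ℤ) : f c (x + n) = f c x + n := by
  unfold f
  rw [show x + (n:ℝ) - c = (x - c) + (n:ℝ) by ring, ψ_per]
  ring

lemma f_three_eighths (c : ℝ) {u : ℝ} (hu : u ∈ Icc (-(3/8) : ℝ) (3/8)) :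
    u + ψ u ∈ Ioo (-(1/8) : ℝ) (1/8) := by
  have h1 : u + ψ u ≤ 3/8 + ψ (3/8) := by
    have := (f_strictMono 0).monotone (show u ≤ 3/8 from hu.2)
    simpa [f] using this
  have h2 : -(3/8) + ψ (-(3/8)) ≤ u + ψ u := by
    have := (f_strictMono 0).monotone (show -(3/8) ≤ u from hu.1)
    simpa [f] using this
  have h3 := ψ_at_three_eighths
  have h4 : ψ (-(3/8)) = -ψ (3/8) := ψ_odd (3/8)
  constructor
  · linarith
  · linarith

/-- The ping-pong sets on ℝ : unions of intervals of radius 1/8 around `ℤ + c`. -/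
def S (c : ℝ) : Set ℝ := ⋃ n : ℤ, Ioo ((n:ℝ) + c - 1/8) ((n:ℝ) + c + 1/8)

lemma mem_S {c x : ℝ} : x ∈ S c ↔ ∃ n : ℤ, (n:ℝ) + c - 1/8 < x ∧ x < (n:ℝ) + c + 1/8 := by
  simp [S, mem_iUnion, mem_Ioo]

lemma S_disjoint {c₁ c₂ : ℝ} (j : ℤ) (h1 : 1 ≤ j) (h2 : j ≤ 3) (h : c₂ - c₁ = j/4) :
    Disjoint (S c₁) (S c₂) := by
  rw [Set.disjoint_left]
  intro x hx1 hx2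
  obtain ⟨n, hn1, hn2⟩ := mem_S.1 hx1
  obtain ⟨m, hm1, hm2⟩ := mem_S.1 hx2
  have hb1 : (j:ℝ) - 1 < ((4*(n-m) : ℤ) : ℝ) := by push_cast; nlinarith
  have hb2 : ((4*(n-m) : ℤ) : ℝ) < (j:ℝ) + 1 := by push_cast; nlinarith
  have hb1' : j - 1 < 4*(n-m) := by exact_mod_cast hb1
  have hb2' : 4*(n-m) < j + 1 := by exact_mod_cast hb2
  omega

/-- Main dynamical lemma: `f c` maps the complement of `S (c + 1/2)` into `S c`. -/
lemma f_maps (c x : ℝ) (hx : x ∉ S (c + 1/2)) : f c x ∈ S c := by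
  set m : ℤ := round (x - c) with hm
  have hdist : |x - c - m| ≤ 1/2 := abs_sub_round (x - c)
  rw [abs_le] at hdist
  have hcase : x - c - m ∈ Icc (-(3/8) : ℝ) (3/8) := by
    constructor
    · by_contra hlt
      push_neg at hlt
      exact hx (mem_S.2 ⟨m - 1, by push_cast; constructor <;> linarith⟩)
    · by_contra hlt
      push_neg at hlt
      exact hx (mem_S.2 ⟨m, by constructor <;> linarith⟩)
  have hval := f_three_eighths c hcase
  have hf : f c x = (x - c - m) + ψ (x - c - m) + m + c := by
    unfold f
    rw [show x - c = (x - c - m) + (m:ℝ) by ring, ψ_per]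
    ring
  refine mem_S.2 ⟨m, ?_, ?_⟩
  · rw [hf]; linarith [hval.1]
  · rw [hf]; linarith [hval.2]

/-- Order isomorphism induced by `f c`. -/
def fIso (c : ℝ) : ℝ ≃o ℝ :=
  StrictMono.orderIsoOfSurjective (f c) (f_strictMono c) (f_surjective c)

lemma fIso_apply (c x : ℝ) : fIso c x = f c x := rfl

lemma fIso_symm_contDiff (c : ℝ) : ContDiff ℝ (⊤ : ℕ∞) ⇑(fIso c).toHomeomorph.symm := by
  apply Homeomorph.contDiff_symm_deriv (fIso c).toHomeomorph
    (f' := fun x => 1 + dψ (x - c)) (fun x => (dψ_pos (x - c)).ne')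
  · intro x
    have h := f_hasDerivAt c x
    have he : ⇑(fIso c).toHomeomorph = f c := rfl
    rw [he]
    exact h
  · have he : ⇑(fIso c).toHomeomorph = f c := rfl
    rw [he]
    have : ContDiff ℝ (⊤ : ℕ∞) (f c) := by
      unfold f
      exact contDiff_id.add (ψ_contDiff.comp (contDiff_id.sub contDiff_const))
    exact this

lemma fIso_symm_eq (c : ℝ) : ⇑(fIso c).toHomeomorph.symm = ⇑(fIso c).symm := rfl

/-- The permutation of `(0, ∞)` obtained by conjugating `f c` with `exp`. -/
def P (c : ℝ) : Equiv.Perm ↥(Set.Ioi (0:ℝ)) :=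
  Real.expOrderIso.toEquiv.permCongr (fIso c).toEquiv

lemma expOrderIso_symm_eq (x : ↥(Set.Ioi (0:ℝ))) :
    Real.expOrderIso.toEquiv.symm x = Real.log (x : ℝ) := by
  rw [Real.log_of_pos x.2]
  rfl

lemma P_apply (c : ℝ) (x : ↥(Set.Ioi (0:ℝ))) :
    ((P c x : ℝ)) = Real.exp (f c (Real.log (x : ℝ))) := by
  unfold P
  rw [Equiv.permCongr_apply, expOrderIso_symm_eq]
  exact Real.coe_expOrderIso_apply _

lemma P_inv (c : ℝ) : (P c)⁻¹ = Real.expOrderIso.toEquiv.permCongr ((fIso c).toEquiv)⁻¹ :=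
  Equiv.ext fun x => rfl

lemma P_inv_apply (c : ℝ) (x : ↥(Set.Ioi (0:ℝ))) :
    (((P c)⁻¹ x : ℝ)) = Real.exp ((fIso c).symm (Real.log (x : ℝ))) := by
  rw [P_inv]
  rw [Equiv.permCongr_apply, expOrderIso_symm_eq]
  exact Real.coe_expOrderIso_apply _

lemma P_strictMono (c : ℝ) : StrictMono (fun x : ↥(Set.Ioi (0:ℝ)) => (P c x : ℝ)) := by
  intro x y hxy
  simp only [P_apply]
  have hxy' : (x:ℝ) < (y:ℝ) := hxy
  exact Real.exp_lt_exp.2 ((f_strictMono c) (Real.log_lt_log x.2 hxy'))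

lemma P_bounds (c : ℝ) (x : ↥(Set.Ioi (0:ℝ))) :
    Real.exp (-1) * (x:ℝ) ≤ (P c x : ℝ) ∧ (P c x : ℝ) ≤ Real.exp 1 * (x:ℝ) := by
  rw [P_apply]
  have hd := f_dist c (Real.log (x:ℝ))
  rw [abs_le] at hd
  have h1 : Real.exp (f c (Real.log (x:ℝ))) ≤ Real.exp (Real.log (x:ℝ) + 1) :=
    Real.exp_le_exp.2 (by linarith [hd.2])
  have h2 : Real.exp (Real.log (x:ℝ) + (-1)) ≤ Real.exp (f c (Real.log (x:ℝ))) :=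
    Real.exp_le_exp.2 (by linarith [hd.1])
  rw [Real.exp_add, Real.exp_log x.2] at h1 h2
  constructor <;> linarith

lemma P_maps (c : ℝ) (t : ↥(Set.Ioi (0:ℝ))) (ht : Real.log (t:ℝ) ∉ S (c + 1/2)) :
    Real.log ((P c t : ℝ)) ∈ S c := by
  rw [P_apply, Real.log_exp]
  exact f_maps c _ ht

lemma P_inv_maps (c : ℝ) (t : ↥(Set.Ioi (0:ℝ))) (ht : Real.log (t:ℝ) ∉ S c) :
    Real.log (((P c)⁻¹ t : ℝ)) ∈ S (c + 1/2) := by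
  by_contra h
  apply ht
  have := P_maps c ((P c)⁻¹ t) h
  rwa [show (P c) ((P c)⁻¹ t) = t from (Equiv.eq_symm_apply _).mp rfl] at this

lemma f_contDiff (c : ℝ) : ContDiff ℝ (⊤ : ℕ∞) (f c) := by
  unfold f
  exact contDiff_id.add (ψ_contDiff.comp (contDiff_id.sub contDiff_const))

lemma contDiffOn_log' : ContDiffOn ℝ (⊤ : ℕ∞) Real.log (Set.Ioi 0) :=
  fun x hx => (Real.contDiffAt_log.2 (ne_of_gt hx)).contDiffWithinAt

/-- The ping-pong sets on the halfline. -/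
def Xset : Bool → Set ↥(Set.Ioi (0:ℝ)) :=
  fun i => {t | Real.log (t:ℝ) ∈ S (if i then 0 else 1/4)}

def Yset : Bool → Set ↥(Set.Ioi (0:ℝ)) :=
  fun i => {t | Real.log (t:ℝ) ∈ S ((if i then 0 else 1/4) + 1/2)}

lemma disj_pre {c₁ c₂ : ℝ} (h : Disjoint (S c₁) (S c₂)) :
    Disjoint {t : ↥(Set.Ioi (0:ℝ)) | Real.log (t:ℝ) ∈ S c₁}
      {t : ↥(Set.Ioi (0:ℝ)) | Real.log (t:ℝ) ∈ S c₂} := by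
  rw [Set.disjoint_left] at h ⊢
  intro t ht1 ht2
  exact h ht1 ht2

lemma main_injective :
    Function.Injective
      (FreeGroup.lift (fun i : Bool => if i then P 0 else P (1/4)) :
        FreeGroup Bool →* Equiv.Perm ↥(Set.Ioi (0 : ℝ))) := by
  apply FreeGroup.injective_lift_of_ping_pong _ Xset Yset
  · -- nonempty
    intro i
    refine ⟨⟨Real.exp (if i then 0 else 1/4), Real.exp_pos _⟩, ?_⟩
    show Real.log _ ∈ S _
    rw [Real.log_exp]
    exact mem_S.2 ⟨0, by cases i <;> norm_num⟩
  · -- X disjoint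
    intro i j hij
    have hd : Disjoint (S 0) (S (1/4)) :=
      S_disjoint 1 (by norm_num) (by norm_num) (by norm_num)
    cases i <;> cases j
    · exact absurd rfl hij
    · exact (disj_pre hd).symm
    · exact disj_pre hd
    · exact absurd rfl hij
  · -- Y disjoint
    intro i j hij
    have hd : Disjoint (S (0 + 1/2)) (S (1/4 + 1/2)) :=
      S_disjoint 1 (by norm_num) (by norm_num) (by norm_num)
    cases i <;> cases j
    · exact absurd rfl hij
    · exact (disj_pre hd).symm
    · exact disj_pre hd
    · exact absurd rfl hij
  · -- X-Y disjoint
    intro i j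
    cases i <;> cases j
    · exact disj_pre (S_disjoint (c₁ := 1/4) (c₂ := 1/4 + 1/2) 2
        (by norm_num) (by norm_num) (by norm_num))
    · exact disj_pre (S_disjoint (c₁ := 1/4) (c₂ := 0 + 1/2) 1
        (by norm_num) (by norm_num) (by norm_num))
    · exact disj_pre (S_disjoint (c₁ := 0) (c₂ := 1/4 + 1/2) 3
        (by norm_num) (by norm_num) (by norm_num))
    · exact disj_pre (S_disjoint (c₁ := 0) (c₂ := 0 + 1/2) 2
        (by norm_num) (by norm_num) (by norm_num))
  · -- a i maps (Y i)ᶜ into X i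
    intro i y hy
    rw [Set.mem_smul_set] at hy
    obtain ⟨t, ht, rfl⟩ := hy
    cases i
    · exact P_maps (1/4) t ht
    · exact P_maps 0 t ht
  · -- (a i)⁻¹ maps (X i)ᶜ into Y i
    intro i y hy
    rw [Set.mem_smul_set] at hy
    obtain ⟨t, ht, rfl⟩ := hy
    cases i
    · exact P_inv_maps (1/4) t ht
    · exact P_inv_maps 0 t ht

lemma P_smooth_witness (c : ℝ) :
    ∃ A : ℝ → ℝ, ContDiffOn ℝ (⊤ : ℕ∞) A (Set.Ioi 0) ∧
      ∀ x : ↥(Set.Ioi (0 : ℝ)), A (x : ℝ) = (P c x : ℝ) := by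
  refine ⟨fun t => Real.exp (f c (Real.log t)), ?_, fun x => (P_apply c x).symm⟩
  exact (Real.contDiff_exp.comp (f_contDiff c)).comp_contDiffOn contDiffOn_log'

lemma P_inv_smooth_witness (c : ℝ) :
    ∃ A : ℝ → ℝ, ContDiffOn ℝ (⊤ : ℕ∞) A (Set.Ioi 0) ∧
      ∀ x : ↥(Set.Ioi (0 : ℝ)), A (x : ℝ) = ((P c)⁻¹ x : ℝ) := by
  refine ⟨fun t => Real.exp ((fIso c).toHomeomorph.symm (Real.log t)), ?_, fun x => ?_⟩
  · exact (Real.contDiff_exp.comp (fIso_symm_contDiff c)).comp_contDiffOn contDiffOn_log'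
  · rw [P_inv_apply, fIso_symm_eq]

end Stmt3Aux


open Set

/-- there exist C^∞ diffeomorphisms a, b of (0,∞) and constants
0 < C ≤ C' with C·t ≤ a(t), b(t) ≤ C'·t, generating a nonabelian free group of
bijections of (0,∞). -/
theorem stmt3 :
    ∃ (a b : Equiv.Perm ↥(Set.Ioi (0 : ℝ))) (C C' : ℝ),
      0 < C ∧ C ≤ C' ∧
      -- a and b are strictly increasing
      StrictMono (fun x : ↥(Set.Ioi (0 : ℝ)) => (a x : ℝ)) ∧
      StrictMono (fun x : ↥(Set.Ioi (0 : ℝ)) => (b x : ℝ)) ∧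
      -- a, a⁻¹, b, b⁻¹ are smooth (restrictions to (0,∞) of smooth functions)
      (∀ e ∈ ({a, a⁻¹, b, b⁻¹} : Set (Equiv.Perm ↥(Set.Ioi (0 : ℝ)))),
        ∃ A : ℝ → ℝ, ContDiffOn ℝ (⊤ : ℕ∞) A (Set.Ioi 0) ∧
          ∀ x : ↥(Set.Ioi (0 : ℝ)), A (x : ℝ) = (e x : ℝ)) ∧
      -- tameness bounds
      (∀ x : ↥(Set.Ioi (0 : ℝ)),
        C * (x : ℝ) ≤ (a x : ℝ) ∧ (a x : ℝ) ≤ C' * (x : ℝ) ∧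
        C * (x : ℝ) ≤ (b x : ℝ) ∧ (b x : ℝ) ≤ C' * (x : ℝ)) ∧
      -- a and b generate a free group of rank two
      Function.Injective
        (FreeGroup.lift (fun i : Bool => if i then a else b) :
          FreeGroup Bool →* Equiv.Perm ↥(Set.Ioi (0 : ℝ))) := by
  refine ⟨Stmt3Aux.P 0, Stmt3Aux.P (1/4), Real.exp (-1), Real.exp 1, Real.exp_pos _,
    Real.exp_le_exp.2 (by norm_num), Stmt3Aux.P_strictMono 0, Stmt3Aux.P_strictMono (1/4),
    ?_, ?_, ?_⟩
  · intro e he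
    simp only [Set.mem_insert_iff, Set.mem_singleton_iff] at he
    rcases he with rfl | rfl | rfl | rfl
    · exact Stmt3Aux.P_smooth_witness 0
    · exact Stmt3Aux.P_inv_smooth_witness 0
    · exact Stmt3Aux.P_smooth_witness (1/4)
    · exact Stmt3Aux.P_inv_smooth_witness (1/4)
  · intro x
    exact ⟨(Stmt3Aux.P_bounds 0 x).1, (Stmt3Aux.P_bounds 0 x).2,
      (Stmt3Aux.P_bounds (1/4) x).1, (Stmt3Aux.P_bounds (1/4) x).2⟩
  · exact Stmt3Aux.main_injective
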